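/- Let p_0 ≥ 1/(2n) and consider a value p ∈ [1/(2n), 1/2] that starts at p_0 and in each of L rounds is either doubled (capped at 1/2) or halved (floored at 1/(2n)). If at least (3/5)L of the operations are doublings and at most (2/5)L are halvings, and L ≥ 10·log₂ n, then in at least L/10 of the rounds the value equals 1/2. -/

import Mathlib

open Finset

/-- Deterministic counting argument for the doubling/halving process: if a
    value in [1/(2n), 1/2] is doubled (capped at 1/2) in at least (3/5)L of
    L rounds and halved (floored at 1/(2n)) otherwise, with L ≥ 10·log₂ n,
    then the value equals 1/2 in at least L/10 rounds. -/
theorem doubling_halving_half_rounds (n L : ℕ) (hn : 2 ≤ n) (hL : 0 < L)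
    (p : ℕ → ℝ) (op : ℕ → Bool)
    (hp0 : 1 / (2 * (n : ℝ)) ≤ p 0)
    (hp0' : p 0 ≤ 1 / 2)
    (hstep : ∀ t < L, p (t + 1) =
      if op t then min (2 * p t) (1 / 2) else max (p t / 2) (1 / (2 * (n : ℝ))))
    (hdouble : (3 : ℝ) / 5 * L ≤ (((range L).filter (fun t => op t = true)).card : ℝ))
    (hlog : 10 * Real.logb 2 n ≤ (L : ℝ)) :
    (L : ℝ) / 10 ≤ (((Icc 1 L).filter (fun t => p t = 1 / 2)).card : ℝ) := by
  classical
  have hn2 : (2 : ℝ) ≤ (n : ℝ) := by exact_mod_cast hn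
  have h2n : (0 : ℝ) < 2 * n := by linarith
  have hlow : (0 : ℝ) < 1 / (2 * (n : ℝ)) := by positivity
  have hlowhalf : 1 / (2 * (n : ℝ)) ≤ 1 / 2 := by
    rw [div_le_div_iff₀ h2n (by norm_num)]; linarith
  -- invariant
  have hinv : ∀ t, t ≤ L → 1 / (2 * (n : ℝ)) ≤ p t ∧ p t ≤ 1 / 2 := by
    intro t
    induction t with
    | zero => intro _; exact ⟨hp0, hp0'⟩
    | succ t ih =>
      intro hle
      have ht : t < L := hle
      obtain ⟨h1, h2⟩ := ih ht.le
      rw [hstep t ht]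
      by_cases hop : op t
      · simp only [hop, if_true]
        refine ⟨le_min (by linarith) hlowhalf, min_le_right _ _⟩
      · simp only [hop, if_false]
        exact ⟨le_max_right _ _, max_le (by linarith) hlowhalf⟩
  have hpos : ∀ t, t ≤ L → 0 < p t := fun t ht => lt_of_lt_of_le hlow (hinv t ht).1
  set φ : ℕ → ℝ := fun t => Real.logb 2 (p t) with hφ
  have hb : (1 : ℝ) < 2 := by norm_num
  -- per-step bound
  have hstepb : ∀ t < L, ((if op t then (1:ℝ) else -1)
      - (if op t = true ∧ p (t+1) = 1/2 then (1:ℝ) else 0)) ≤ φ (t+1) - φ t := by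
    intro t ht
    have hpt := hpos t ht.le
    have hh := (hinv t ht.le).2
    by_cases hop : op t
    · by_cases hc : p (t+1) = 1/2
      · simp only [hop, hc, if_true, and_self]
        have : φ t ≤ φ (t+1) := by
          rw [hφ]; exact Real.logb_le_logb_of_le hb hpt (by rw [hc] at *; linarith)
        linarith
      · have hne : ¬ (op t = true ∧ p (t+1) = 1/2) := fun h => hc h.2
        rw [if_pos hop, if_neg hne]
        have heq : p (t+1) = 2 * p t := by
          have := hstep t ht
          rw [if_pos hop] at this
          rcases min_cases (2 * p t) (1/2 : ℝ) with ⟨h, _⟩ | ⟨h, _⟩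
          · rw [this, h]
          · exact absurd (this.trans h) hc
        rw [hφ]
        simp only
        rw [heq, Real.logb_mul (by norm_num) (ne_of_gt hpt),
          Real.logb_self_eq_one hb]
        linarith
    · have hne : ¬ (op t = true ∧ p (t+1) = 1/2) := fun h => by
        rw [h.1] at hop; exact hop rfl
      rw [if_neg hop, if_neg hne]
      have hge : p t / 2 ≤ p (t+1) := by
        rw [hstep t ht, if_neg hop]; exact le_max_left _ _
      have : Real.logb 2 (p t / 2) ≤ φ (t+1) :=
        Real.logb_le_logb_of_le hb (by positivity) hge
      rw [Real.logb_div (ne_of_gt hpt) (by norm_num), Real.logb_self_eq_one hb] at this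
      simp only [hφ] at this ⊢
      linarith
  -- telescoping sum
  have htel : ∑ t ∈ range L, (φ (t+1) - φ t) = φ L - φ 0 := Finset.sum_range_sub φ L
  have hsum : ∑ t ∈ range L, ((if op t then (1:ℝ) else -1)
      - (if op t = true ∧ p (t+1) = 1/2 then (1:ℝ) else 0)) ≤ φ L - φ 0 := by
    rw [← htel]
    exact Finset.sum_le_sum fun t ht => hstepb t (Finset.mem_range.mp ht)
  set D : ℕ := ((range L).filter (fun t => op t = true)).card with hD
  set C : ℕ := ((range L).filter (fun t => op t = true ∧ p (t+1) = 1/2)).card with hC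
  have hsum1 : ∑ t ∈ range L, (if op t then (1:ℝ) else -1) = 2 * D - L := by
    have : ∀ t, (if op t then (1:ℝ) else -1) = 2 * (if op t = true then (1:ℝ) else 0) - 1 := by
      intro t; by_cases h : op t <;> simp [h] <;> norm_num
    simp_rw [this]
    rw [Finset.sum_sub_distrib, ← Finset.mul_sum, Finset.sum_boole, Finset.sum_const,
      Finset.card_range]
    simp [hD]
  have hsum2 : ∑ t ∈ range L, (if op t = true ∧ p (t+1) = 1/2 then (1:ℝ) else 0) = C := by
    rw [Finset.sum_boole, hC]
  rw [Finset.sum_sub_distrib, hsum1, hsum2] at hsum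
  -- bounds on φ L and φ 0
  have hφL : φ L ≤ -1 := by
    have := Real.logb_le_logb_of_le hb (hpos L le_rfl) (hinv L le_rfl).2
    rwa [show (1:ℝ)/2 = 1/2 from rfl, Real.logb_div (by norm_num) (by norm_num),
      Real.logb_one, Real.logb_self_eq_one hb, zero_sub] at this
  have hφ0 : -(1 + Real.logb 2 n) ≤ φ 0 := by
    have := Real.logb_le_logb_of_le hb hlow hp0
    rw [Real.logb_div (by norm_num) (ne_of_gt h2n), Real.logb_one,
      Real.logb_mul (by norm_num) (by positivity), Real.logb_self_eq_one hb,
      zero_sub, neg_add] at this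
    simp only [hφ]
    linarith
  have hmain : 2 * (D:ℝ) - L - C ≤ Real.logb 2 n := by linarith
  -- C is at most the number of half-rounds
  have hCle : C ≤ ((Icc 1 L).filter (fun t => p t = 1/2)).card := by
    rw [hC]
    apply Finset.card_le_card_of_injOn (fun t => t + 1)
    · intro t ht
      simp only [Finset.mem_coe, Finset.mem_filter, Finset.mem_range] at ht
      simp only [Finset.mem_coe, Finset.mem_filter, Finset.mem_Icc]
      exact ⟨⟨Nat.one_le_iff_ne_zero.mpr (Nat.succ_ne_zero t), ht.1⟩, ht.2.2⟩
    · intro a _ b _ h; exact Nat.succ_injective h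
  have hCle' : (C:ℝ) ≤ (((Icc 1 L).filter (fun t => p t = 1/2)).card : ℝ) := by
    exact_mod_cast hCle
  linarith
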